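/- For every natural number n, the operator identity (X + q s D_q)(X + q³ s D_q) ⋯ (X + q^{2n-1} s D_q) = Σ_{k=0}^{n} [n choose k]_q · q^{kn} · h_{n-k}(X,s) · (s D_q)^k holds on the polynomial ring, where h_{n-k}(X,s) denotes multiplication by the polynomial h_{n-k}(x,s). -/

import Mathlib

noncomputable section

/-- The field `ℚ(q,s)` of rational functions in two indeterminates. -/
abbrev F : Type := FractionRing (MvPolynomial (Fin 2) ℚ)

/-- The indeterminate `q`. -/
def q : F := algebraMap (MvPolynomial (Fin 2) ℚ) F (MvPolynomial.X 0)

/-- The indeterminate `s`. -/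
def s : F := algebraMap (MvPolynomial (Fin 2) ℚ) F (MvPolynomial.X 1)

/-- The q-integer `[n]_q = 1 + q + ⋯ + q^{n-1}`. -/
def qInt (n : ℕ) : F := ∑ i ∈ Finset.range n, q ^ i

/-- The q-factorial `[n]_q! = ∏_{k=1}^n [k]_q`. -/
def qFact (n : ℕ) : F := ∏ k ∈ Finset.range n, qInt (k + 1)

/-- The q-binomial coefficient `[n choose k]_q = [n]_q!/([k]_q! [n-k]_q!)`. -/
def qBinom (n k : ℕ) : F := qFact n / (qFact k * qFact (n - k))

/-- The operator `X` of multiplication by `x` on `F[x]`. -/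
def Xop : Module.End F (Polynomial F) := LinearMap.mulLeft F Polynomial.X

/-- Division by `x` (discarding the constant term), as a linear map. -/
def divXL : Polynomial F →ₗ[F] Polynomial F where
  toFun := Polynomial.divX
  map_add' p r := Polynomial.divX_add
  map_smul' a p := by
    ext n
    simp [Polynomial.coeff_divX, Polynomial.coeff_smul]

/-- The q-derivative `D_q f(x) = (f(qx) - f(x))/((q-1)x)`; it is the F-linear
operator on `F[x]` determined by `D_q x^n = [n]_q x^{n-1}`. -/
def Dq : Module.End F (Polynomial F) :=
  (q - 1)⁻¹ •
    (divXL ∘ₗ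
      ((Polynomial.aeval (Polynomial.C q * Polynomial.X)).toLinearMap - LinearMap.id))

/-- The polynomials `h_n(x,t) = Σ_j q^{j²} t^j [n]_q!/((1+q)⋯(1+q^j)·[j]_q!·[n-2j]_q!)
x^{n-2j}` (the parameter `t` will be specialized to `s` or `q²s`). -/
def h (t : F) (n : ℕ) : Polynomial F :=
  ∑ j ∈ Finset.range (n / 2 + 1),
    Polynomial.C (q ^ (j ^ 2) * t ^ j * qFact n /
        ((∏ i ∈ Finset.range j, (1 + q ^ (i + 1))) * qFact j * qFact (n - 2 * j))) *
      Polynomial.X ^ (n - 2 * j)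


/-- `G(n) = (X + q s D_q)(X + q³ s D_q) ⋯ (X + q^{2n-1} s D_q)`,
with the factor `(X + q^{2n-1} s D_q)` acting first. -/
def Gop : ℕ → Module.End F (Polynomial F)
  | 0 => 1
  | n + 1 => Gop n * (Xop + (q ^ (2 * n + 1) * s) • Dq)


open Finset Polynomial

lemma algMap_ne_zero {p : MvPolynomial (Fin 2) ℚ}
    (hp : MvPolynomial.aeval (fun _ => (2:ℚ)) p ≠ 0) :
    algebraMap (MvPolynomial (Fin 2) ℚ) F p ≠ 0 := by
  intro hz
  apply hp
  have : p = 0 := by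
    have := IsFractionRing.injective (MvPolynomial (Fin 2) ℚ) F
    exact this (by simpa using hz)
  simp [this]

lemma qInt_ne_zero (n : ℕ) : qInt (n + 1) ≠ 0 := by
  have : qInt (n+1) = algebraMap (MvPolynomial (Fin 2) ℚ) F
      (∑ i ∈ Finset.range (n+1), MvPolynomial.X 0 ^ i) := by
    simp [qInt, q, map_sum]
  rw [this]
  apply algMap_ne_zero
  rw [map_sum]
  simp only [map_pow, MvPolynomial.aeval_X]
  positivity

lemma one_add_q_pow_ne_zero (i : ℕ) : (1 : F) + q ^ i ≠ 0 := by
  have : (1:F) + q ^ i = algebraMap (MvPolynomial (Fin 2) ℚ) F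
      (1 + MvPolynomial.X 0 ^ i) := by simp [q]
  rw [this]
  apply algMap_ne_zero
  simp
  positivity

lemma qFact_succ (n : ℕ) : qFact (n + 1) = qFact n * qInt (n + 1) := by
  simp [qFact, Finset.prod_range_succ]

lemma qFact_ne_zero (n : ℕ) : qFact n ≠ 0 := by
  induction n with
  | zero => simp [qFact]
  | succ n ih => rw [qFact_succ]; exact mul_ne_zero ih (qInt_ne_zero n)

lemma cprod_ne_zero (j : ℕ) : (∏ i ∈ Finset.range j, ((1:F) + q ^ (i+1))) ≠ 0 :=
  Finset.prod_ne_zero_iff.2 fun i _ => one_add_q_pow_ne_zero (i+1)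

lemma qInt_add (a b : ℕ) : qInt (a + b) = qInt a + q ^ a * qInt b := by
  rw [qInt, qInt, qInt, Finset.sum_range_add, Finset.mul_sum]
  simp [pow_add]

lemma qFact_zero : qFact 0 = 1 := by simp [qFact]

lemma qBinom_zero (n : ℕ) : qBinom n 0 = 1 := by
  simp [qBinom, qFact_zero, div_self (qFact_ne_zero n)]

lemma qBinom_self (n : ℕ) : qBinom n n = 1 := by
  simp [qBinom, qFact_zero, div_self (qFact_ne_zero n)]

lemma qBinom_pascal (a b : ℕ) :
    qBinom (a+b+2) (a+1) = qBinom (a+b+1) (a+1) + q^(b+1) * qBinom (a+b+1) a := by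
  have h1 : a+b+2 - (a+1) = b+1 := by omega
  have h2 : a+b+1 - (a+1) = b := by omega
  have h3 : a+b+1 - a = b+1 := by omega
  rw [qBinom, qBinom, qBinom, h1, h2, h3]
  rw [show a+b+2 = (a+b+1)+1 by ring, qFact_succ (a+b+1)]
  rw [show qInt (a+b+1+1) = qInt (b+1) + q^(b+1) * qInt (a+1) from by
    rw [show a+b+1+1 = (b+1)+(a+1) by ring, qInt_add]]
  rw [qFact_succ a, qFact_succ b]
  have := qFact_ne_zero a
  have := qFact_ne_zero b
  have := qFact_ne_zero (a+b+1)
  have := qInt_ne_zero a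
  have := qInt_ne_zero b
  field_simp

lemma qBinom_ratio (a b : ℕ) :
    qBinom (a+b+1) (a+1) * qInt (a+1) = qBinom (a+b+1) a * qInt (b+1) := by
  have h2 : a+b+1 - (a+1) = b := by omega
  have h3 : a+b+1 - a = b+1 := by omega
  rw [qBinom, qBinom, h2, h3, qFact_succ a, qFact_succ b]
  have := qFact_ne_zero a
  have := qFact_ne_zero b
  have := qInt_ne_zero a
  have := qInt_ne_zero b
  field_simp

/-- coefficient of `x^{n-2j}` in `h s n`. -/
def Acoef (n j : ℕ) : F :=
  q ^ (j ^ 2) * s ^ j * qFact n /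
    ((∏ i ∈ Finset.range j, (1 + q ^ (i + 1))) * qFact j * qFact (n - 2 * j))

lemma h_eq (n : ℕ) : h s n =
    ∑ j ∈ Finset.range (n / 2 + 1), Polynomial.C (Acoef n j) * Polynomial.X ^ (n - 2 * j) := rfl

set_option maxHeartbeats 1000000 in
lemma Acoef_main (i d : ℕ) :
    Acoef (2*i+3+d) (i+1)
      = Acoef (2*i+2+d) (i+1) + q^(2*i+2+d) * qInt (2*i+2+d) * s * Acoef (2*i+1+d) i := by
  have e1 : qInt (2*i+3+d) = qInt (d+1) + q^(d+1) * ((1 + q^(i+1)) * qInt (i+1)) := by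
    have h1 := qInt_add (d+1) (2*(i+1))
    have h2 := qInt_add (i+1) (i+1)
    rw [show (d+1)+(2*(i+1)) = 2*i+3+d by ring] at h1
    rw [show (i+1)+(i+1) = 2*(i+1) by ring] at h2
    rw [h1, h2]; ring
  rw [Acoef, Acoef, Acoef]
  rw [show 2*i+3+d - 2*(i+1) = d+1 by omega, show 2*i+2+d - 2*(i+1) = d by omega,
    show 2*i+1+d - 2*i = d+1 by omega]
  rw [show (2*i+3+d) = (2*i+2+d)+1 by ring, qFact_succ (2*i+2+d),
    show (2*i+2+d) = (2*i+1+d)+1 by ring, qFact_succ (2*i+1+d),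
    qFact_succ d, qFact_succ i, Finset.prod_range_succ]
  rw [show (2*i+1+d+1+1) = 2*i+3+d by ring, show (2*i+1+d+1) = 2*i+2+d by ring, e1]
  rw [show (i+1)^2 = i^2 + (2*i+1) by ring, pow_add, pow_succ s]
  have := qFact_ne_zero i
  have := qFact_ne_zero d
  have := qFact_ne_zero (2*i+1+d)
  have := qInt_ne_zero i
  have := qInt_ne_zero d
  have := qInt_ne_zero (2*i+1+d)
  have := cprod_ne_zero i
  have := one_add_q_pow_ne_zero (i+1)
  have hA : (1:F) + q*q^i ≠ 0 := by
    have := one_add_q_pow_ne_zero (i+1); rwa [pow_succ, mul_comm (q^i) q] at this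
  have hB : qInt (1+i) ≠ 0 := by rw [Nat.add_comm]; exact qInt_ne_zero i
  have hC : qInt (1+d) ≠ 0 := by rw [Nat.add_comm]; exact qInt_ne_zero d
  field_simp
  ring

set_option maxHeartbeats 1000000 in
lemma Acoef_top (i : ℕ) :
    Acoef (2*i+2) (i+1) = q^(2*i+1) * qInt (2*i+1) * s * Acoef (2*i) i := by
  have e2 : qInt (2*i+2) = (1 + q^(i+1)) * qInt (i+1) := by
    have h2 := qInt_add (i+1) (i+1)
    rw [show (i+1)+(i+1) = 2*i+2 by ring] at h2
    rw [h2]; ring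
  rw [Acoef, Acoef]
  rw [show 2*i+2 - 2*(i+1) = 0 by omega, show 2*i - 2*i = 0 by omega, qFact_zero]
  rw [show (2*i+2) = (2*i+1)+1 by ring, qFact_succ (2*i+1),
    show (2*i+1) = (2*i)+1 by ring, qFact_succ (2*i),
    qFact_succ i, Finset.prod_range_succ]
  rw [show (2*i+1+1) = 2*i+2 by ring, e2]
  rw [show (i+1)^2 = i^2 + (2*i+1) by ring, pow_add, pow_succ s]
  have := qFact_ne_zero i
  have := qFact_ne_zero (2*i)
  have := qInt_ne_zero i
  have := qInt_ne_zero (2*i)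
  have := cprod_ne_zero i
  have := one_add_q_pow_ne_zero (i+1)
  have hA : (1:F) + q*q^i ≠ 0 := by
    have := one_add_q_pow_ne_zero (i+1); rwa [pow_succ, mul_comm (q^i) q] at this
  have hB : qInt (1+i) ≠ 0 := by rw [Nat.add_comm]; exact qInt_ne_zero i
  field_simp

lemma Acoef_zero (n : ℕ) : Acoef n 0 = 1 := by
  simp [Acoef, qFact_zero, div_self (qFact_ne_zero n)]

lemma h_rec (m : ℕ) :
    h s (m+1) = Polynomial.X * h s m + Polynomial.C (q^m * qInt m * s) * h s (m-1) := by
  rcases m with _ | m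
  · simp only [h_eq]
    simp [Finset.sum_range_one, Acoef_zero, qInt]
  obtain ⟨r, rfl⟩ | ⟨r, rfl⟩ := Nat.even_or_odd m
  · rw [show r+r+1+1 = 2*r+2 by ring, show r+r+1-1 = 2*r by omega,
      show r+r+1 = 2*r+1 by ring]
    simp only [h_eq]
    rw [show (2*r+2)/2+1 = r+2 by omega, show (2*r+1)/2+1 = r+1 by omega,
      show (2*r)/2+1 = r+1 by omega, Finset.mul_sum, Finset.mul_sum]
    have e0 : Polynomial.C (Acoef (2*r+2) 0) * Polynomial.X ^ (2*r+2-2*0)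
        = Polynomial.X * (Polynomial.C (Acoef (2*r+1) 0) * Polynomial.X ^ (2*r+1-2*0)) := by
      rw [Acoef_zero, Acoef_zero, show 2*r+2-2*0 = (2*r+1-2*0)+1 by omega]
      ring
    have etop : Polynomial.C (Acoef (2*r+2) (r+1)) * Polynomial.X ^ (2*r+2-2*(r+1))
        = Polynomial.C (q^(2*r+1) * qInt (2*r+1) * s)
            * (Polynomial.C (Acoef (2*r) r) * Polynomial.X ^ (2*r-2*r)) := by
      rw [Acoef_top r, show 2*r+2-2*(r+1) = 0 by omega, show 2*r-2*r = 0 by omega]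
      simp only [Polynomial.C_mul]
      ring
    have key : ∀ j ∈ Finset.range r,
        Polynomial.C (Acoef (2*r+2) (j+1)) * Polynomial.X ^ (2*r+2-2*(j+1))
        = Polynomial.X * (Polynomial.C (Acoef (2*r+1) (j+1)) * Polynomial.X ^ (2*r+1-2*(j+1)))
          + Polynomial.C (q^(2*r+1) * qInt (2*r+1) * s)
              * (Polynomial.C (Acoef (2*r) j) * Polynomial.X ^ (2*r-2*j)) := by
      intro j hj
      have hj' : j < r := Finset.mem_range.1 hj
      have hm := Acoef_main j (2*r-2*j-1)
      rw [show 2*j+3+(2*r-2*j-1) = 2*r+2 by omega, show 2*j+2+(2*r-2*j-1) = 2*r+1 by omega,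
        show 2*j+1+(2*r-2*j-1) = 2*r by omega] at hm
      rw [hm, show 2*r+2-2*(j+1) = (2*r+1-2*(j+1))+1 by omega,
        show 2*r-2*j = (2*r+1-2*(j+1))+1 by omega]
      simp only [Polynomial.C_add, Polynomial.C_mul]
      ring
    rw [Finset.sum_range_succ' (fun j => Polynomial.C (Acoef (2*r+2) j) * Polynomial.X ^ (2*r+2-2*j)) (r+1),
      Finset.sum_range_succ (fun j => Polynomial.C (Acoef (2*r+2) (j+1)) * Polynomial.X ^ (2*r+2-2*(j+1))) r,
      Finset.sum_range_succ' (fun j => Polynomial.X * (Polynomial.C (Acoef (2*r+1) j) * Polynomial.X ^ (2*r+1-2*j))) r,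
      Finset.sum_range_succ (fun j => Polynomial.C (q^(2*r+1) * qInt (2*r+1) * s) * (Polynomial.C (Acoef (2*r) j) * Polynomial.X ^ (2*r-2*j))) r,
      Finset.sum_congr rfl key, Finset.sum_add_distrib, e0, etop]
    ring
  · rw [show 2*r+1+1+1 = 2*r+3 by ring, show 2*r+1+1-1 = 2*r+1 by omega,
      show 2*r+1+1 = 2*r+2 by ring]
    simp only [h_eq]
    rw [show (2*r+3)/2+1 = r+2 by omega, show (2*r+2)/2+1 = r+2 by omega,
      show (2*r+1)/2+1 = r+1 by omega, Finset.mul_sum, Finset.mul_sum]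
    have e0 : Polynomial.C (Acoef (2*r+3) 0) * Polynomial.X ^ (2*r+3-2*0)
        = Polynomial.X * (Polynomial.C (Acoef (2*r+2) 0) * Polynomial.X ^ (2*r+2-2*0)) := by
      rw [Acoef_zero, Acoef_zero, show 2*r+3-2*0 = (2*r+2-2*0)+1 by omega]
      ring
    have key : ∀ j ∈ Finset.range (r+1),
        Polynomial.C (Acoef (2*r+3) (j+1)) * Polynomial.X ^ (2*r+3-2*(j+1))
        = Polynomial.X * (Polynomial.C (Acoef (2*r+2) (j+1)) * Polynomial.X ^ (2*r+2-2*(j+1)))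
          + Polynomial.C (q^(2*r+2) * qInt (2*r+2) * s)
              * (Polynomial.C (Acoef (2*r+1) j) * Polynomial.X ^ (2*r+1-2*j)) := by
      intro j hj
      have hj' : j < r+1 := Finset.mem_range.1 hj
      have hm := Acoef_main j (2*r-2*j)
      rw [show 2*j+3+(2*r-2*j) = 2*r+3 by omega, show 2*j+2+(2*r-2*j) = 2*r+2 by omega,
        show 2*j+1+(2*r-2*j) = 2*r+1 by omega] at hm
      rw [hm, show 2*r+3-2*(j+1) = (2*r+2-2*(j+1))+1 by omega,
        show 2*r+1-2*j = (2*r+2-2*(j+1))+1 by omega]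
      simp only [Polynomial.C_add, Polynomial.C_mul]
      ring
    rw [Finset.sum_range_succ' (fun j => Polynomial.C (Acoef (2*r+3) j) * Polynomial.X ^ (2*r+3-2*j)) (r+1),
      Finset.sum_range_succ' (fun j => Polynomial.X * (Polynomial.C (Acoef (2*r+2) j) * Polynomial.X ^ (2*r+2-2*j))) (r+1),
      Finset.sum_congr rfl key, Finset.sum_add_distrib, e0]
    ring

lemma q_sub_one_ne_zero : (q : F) - 1 ≠ 0 := by
  have : (q:F) - 1 = algebraMap (MvPolynomial (Fin 2) ℚ) F (MvPolynomial.X 0 - 1) := by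
    simp [q]
  rw [this]
  apply algMap_ne_zero
  simp
  norm_num

lemma qInt_eq (n : ℕ) : qInt n = (q^n - 1) * (q - 1)⁻¹ := by
  have := geom_sum_mul (q : F) n
  field_simp [q_sub_one_ne_zero]
  simpa [qInt] using this

lemma End_ext {f g : Module.End F (Polynomial F)}
    (hfg : ∀ n, f (Polynomial.X ^ n) = g (Polynomial.X ^ n)) : f = g := by
  apply Polynomial.lhom_ext'
  intro n
  apply LinearMap.ext
  intro a
  simp only [LinearMap.comp_apply, ← Polynomial.smul_X_eq_monomial, map_smul, hfg n]

lemma Dq_X_pow (n : ℕ) : Dq (Polynomial.X ^ n) = qInt n • Polynomial.X ^ (n-1) := by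
  rcases n with _ | n
  · simp [Dq, qInt, divXL]
  · have : Dq (Polynomial.X ^ (n+1)) = (q-1)⁻¹ •
        (Polynomial.divX ((Polynomial.C q * Polynomial.X)^(n+1) - Polynomial.X^(n+1))) := by
      simp [Dq, divXL, LinearMap.smul_apply, LinearMap.comp_apply]
    rw [this, mul_pow, ← Polynomial.C_pow]
    rw [show Polynomial.C (q^(n+1)) * Polynomial.X^(n+1) - Polynomial.X^(n+1)
        = Polynomial.C (q^(n+1) - 1) * Polynomial.X^(n+1) from by
      rw [Polynomial.C_sub, sub_mul]; simp]
    rw [Polynomial.divX_C_mul, Polynomial.divX_X_pow]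
    simp only [Nat.succ_ne_zero, if_false]
    rw [qInt_eq, Polynomial.smul_eq_C_mul, Polynomial.smul_eq_C_mul, Polynomial.C_mul]
    ring

lemma qInt_one : qInt 1 = 1 := by simp [qInt]

lemma qInt_zero : qInt 0 = 0 := by simp [qInt]

lemma qInt_succ' (n : ℕ) : qInt (n+1) = q * qInt n + 1 := by
  have := qInt_add 1 n
  rw [show 1+n = n+1 by ring] at this
  rw [this, qInt_one]
  ring

set_option synthInstance.maxHeartbeats 1000000 in
lemma Dq_comm : Dq * Xop = q • (Xop * Dq) + (1 : Module.End F (Polynomial F)) := by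
  apply End_ext
  intro n
  simp only [Module.End.mul_apply, LinearMap.add_apply, LinearMap.smul_apply,
    Module.End.one_apply, Xop, LinearMap.mulLeft_apply]
  rw [show Polynomial.X * Polynomial.X ^ n = Polynomial.X^(n+1) from (pow_succ' _ _).symm,
    Dq_X_pow, Dq_X_pow]
  cases n with
  | zero => simp [qInt_zero, qInt_one]
  | succ n =>
    rw [show n+1+1-1 = n+1 by omega, show n+1-1 = n by omega, qInt_succ' (n+1),
      mul_smul_comm, show Polynomial.X * Polynomial.X ^ n = Polynomial.X^(n+1) from (pow_succ' _ _).symm,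
      smul_smul, add_smul, one_smul]

set_option synthInstance.maxHeartbeats 1000000 in
lemma A_comm_one : (s • Dq) * Xop = q • (Xop * (s • Dq)) + s • (1 : Module.End F (Polynomial F)) := by
  rw [smul_mul_assoc, Dq_comm, smul_add, mul_smul_comm, smul_smul, smul_smul, mul_comm q s]

set_option synthInstance.maxHeartbeats 1000000 in
set_option maxHeartbeats 1000000 in
lemma A_comm (k : ℕ) : (s • Dq)^k * Xop
    = (q^k) • (Xop * (s • Dq)^k) + (s * qInt k) • (s • Dq)^(k-1) := by
  induction k with
  | zero => simp [qInt_zero]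
  | succ k ih =>
    rw [pow_succ, mul_assoc, A_comm_one, mul_add, mul_smul_comm q, mul_smul_comm s ((s • Dq)^k) (1 : Module.End F (Polynomial F)), mul_one,
      ← mul_assoc, ih, add_mul, smul_mul_assoc, smul_mul_assoc, mul_assoc Xop, ← pow_succ,
      show k+1-1 = k by omega, qInt_succ' k]
    rcases k with _ | k
    · rw [qInt_zero]
      simp only [smul_add, smul_smul, mul_zero, zero_smul, add_zero]
      rw [show (s:F)*(0+1) = s by ring]
      norm_num
    · rw [show k+1-1 = k by omega, ← pow_succ]
      simp only [smul_add, smul_smul]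
      rw [add_assoc, ← add_smul]
      rw [show (q:F)*q^(k+1) = q^(k+1+1) by ring,
        show q*(s*qInt (k+1)) + s = s*(q*qInt (k+1)+1) by ring]

lemma mulLeft_add (p r : Polynomial F) :
    LinearMap.mulLeft F (p + r) = LinearMap.mulLeft F p + LinearMap.mulLeft F r :=
  LinearMap.ext fun x => add_mul _ _ _

lemma mulLeft_C_mul (a : F) (p : Polynomial F) :
    LinearMap.mulLeft F (Polynomial.C a * p) = a • LinearMap.mulLeft F p :=
  LinearMap.ext fun x => by
    simp [LinearMap.mulLeft_apply, Polynomial.smul_eq_C_mul, mul_assoc]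

lemma mulLeft_h_rec (m : ℕ) : LinearMap.mulLeft F (h s (m+1))
    = LinearMap.mulLeft F (Polynomial.X * h s m)
      + (q^m * qInt m * s) • LinearMap.mulLeft F (h s (m-1)) := by
  rw [h_rec m, mulLeft_add, mulLeft_C_mul]

lemma h_zero : h s 0 = 1 := by
  rw [h_eq]
  simp [Acoef_zero]

/-- the summand of the target sum -/
def tt (n k : ℕ) : Module.End F (Polynomial F) :=
  (qBinom n k * q^(k*n)) • (LinearMap.mulLeft F (h s (n-k)) * (s • Dq)^k)

def ta (n k : ℕ) : Module.End F (Polynomial F) :=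
  (qBinom n k * q^(k*n) * q^k) •
    (LinearMap.mulLeft F (Polynomial.X * h s (n-k)) * (s • Dq)^k)

def tb (n k : ℕ) : Module.End F (Polynomial F) :=
  (qBinom n k * q^(k*n) * q^k * (q^(n-k) * qInt (n-k) * s)) •
    (LinearMap.mulLeft F (h s (n-k-1)) * (s • Dq)^k)

def sb (n k : ℕ) : Module.End F (Polynomial F) :=
  (qBinom n k * q^(k*n) * (s * qInt k)) •
    (LinearMap.mulLeft F (h s (n-k)) * (s • Dq)^(k-1))

def tc (n k : ℕ) : Module.End F (Polynomial F) :=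
  (qBinom n k * q^(k*n) * q^(2*n+1)) •
    (LinearMap.mulLeft F (h s (n-k)) * (s • Dq)^(k+1))

set_option synthInstance.maxHeartbeats 1000000 in
set_option maxHeartbeats 1000000 in
lemma mulLeft_Xop (p : Polynomial F) :
    LinearMap.mulLeft F p * Xop = LinearMap.mulLeft F (Polynomial.X * p) := by
  rw [Xop, mul_comm Polynomial.X p, LinearMap.mulLeft_mul]
  rfl

set_option synthInstance.maxHeartbeats 1000000 in
set_option maxHeartbeats 1000000 in
lemma sub1 (n k : ℕ) : tt n k * Xop = ta n k + sb n k := by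
  rw [tt, ta, sb, smul_mul_assoc, mul_assoc, A_comm k, mul_add, mul_smul_comm, mul_smul_comm,
    ← mul_assoc, mulLeft_Xop, smul_add, smul_smul, smul_smul]

set_option synthInstance.maxHeartbeats 1000000 in
set_option maxHeartbeats 1000000 in
lemma sub2 (n k : ℕ) : tt n k * ((q^(2*n+1) * s) • Dq) = tc n k := by
  rw [tt, tc, show (q^(2*n+1) * s) • Dq = q^(2*n+1) • (s • Dq) from (smul_smul _ _ _).symm,
    mul_smul_comm, smul_mul_assoc, mul_assoc, ← pow_succ, smul_smul,
    show q^(2*n+1) * (qBinom n k * q^(k*n)) = qBinom n k * q^(k*n) * q^(2*n+1) by ring]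

set_option synthInstance.maxHeartbeats 1000000 in
set_option maxHeartbeats 1000000 in
lemma step_expand (n k : ℕ) :
    tt n k * (Xop + (q^(2*n+1) * s) • Dq) = ta n k + sb n k + tc n k := by
  rw [mul_add, sub1, sub2]

set_option synthInstance.maxHeartbeats 1000000 in
set_option maxHeartbeats 1000000 in
lemma sb_sum (n : ℕ) : ∑ k ∈ Finset.range (n+1), sb n k = ∑ k ∈ Finset.range (n+1), tb n k := by
  rw [Finset.sum_range_succ' (fun k => sb n k) n, Finset.sum_range_succ (fun k => tb n k) n]
  have hsb0 : sb n 0 = 0 := by rw [sb, qInt_zero]; simp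
  have htbn : tb n n = 0 := by rw [tb, Nat.sub_self, qInt_zero]; simp
  have hmidd : ∀ i ∈ Finset.range n, sb n (i+1) = tb n i := by
    intro i hi
    have hi' := Finset.mem_range.1 hi
    rw [sb, tb, show i+1-1 = i by omega, show n-(i+1) = n-i-1 by omega]
    congr 1
    have hr := qBinom_ratio i (n-i-1)
    rw [show i+(n-i-1)+1 = n by omega, show n-i-1+1 = n-i by omega] at hr
    have hq : q^i * q^(n-i) = q^n := by rw [← pow_add]; congr 1; omega
    have hq1 : q^((i+1)*n) = q^(i*n) * q^n := by rw [← pow_add]; congr 1; ring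
    rw [hq1]
    linear_combination (q^(i*n) * q^n * s) * hr
      - (qBinom n i * qInt (n-i) * s * q^(i*n)) * hq
  rw [Finset.sum_congr rfl hmidd, hsb0, htbn, add_zero]

lemma combine {M : Type*} [AddCommMonoid M] (n : ℕ) (t a b c : ℕ → M)
    (h0 : t 0 = a 0 + b 0)
    (hmid : ∀ k, k < n → t (k+1) = a (k+1) + b (k+1) + c k)
    (htop : t (n+1) = c n) :
    ∑ k ∈ Finset.range (n+2), t k
      = (∑ k ∈ Finset.range (n+1), a k) + (∑ k ∈ Finset.range (n+1), b k)
        + ∑ k ∈ Finset.range (n+1), c k := by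
  rw [Finset.sum_range_succ t (n+1), Finset.sum_range_succ' t n, htop, h0,
    Finset.sum_congr rfl (fun k hk => hmid k (Finset.mem_range.1 hk)),
    Finset.sum_add_distrib, Finset.sum_add_distrib,
    Finset.sum_range_succ' a n, Finset.sum_range_succ' b n, Finset.sum_range_succ c n]
  abel

set_option synthInstance.maxHeartbeats 1000000 in
set_option maxHeartbeats 1000000 in
lemma hyp0 (n : ℕ) : tt (n+1) 0 = ta n 0 + tb n 0 := by
  simp only [tt, ta, tb, Nat.sub_zero, Nat.zero_mul, zero_mul, pow_zero, one_mul, mul_one,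
    qBinom_zero, one_smul]
  exact mulLeft_h_rec n

set_option synthInstance.maxHeartbeats 1000000 in
set_option maxHeartbeats 1000000 in
lemma hyptop (n : ℕ) : tt (n+1) (n+1) = tc n n := by
  rw [tt, tc, qBinom_self, qBinom_self, Nat.sub_self, Nat.sub_self]
  congr 1
  rw [show (n+1)*(n+1) = n*n+(2*n+1) by ring, pow_add]
  ring

set_option synthInstance.maxHeartbeats 1000000 in
set_option maxHeartbeats 1000000 in
lemma hypmid (n k : ℕ) (hk : k < n) : tt (n+1) (k+1) = ta n (k+1) + tb n (k+1) + tc n k := by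
  obtain ⟨m, hm⟩ : ∃ m, n - k = m + 1 := ⟨n-k-1, by omega⟩
  rw [tt, ta, tb, tc, show n+1-(k+1) = m+1 by omega, show n-(k+1) = m by omega,
    hm, mulLeft_h_rec m]
  have hp := qBinom_pascal k m
  rw [show k+m+2 = n+1 by omega, show k+m+1 = n by omega] at hp
  have hq1 : (q:F)^((k+1)*(n+1)) = q^((k+1)*n) * q^(k+1) := by
    rw [← pow_add]; congr 1; try ring
  have hq2 : (q:F)^((k+1)*(n+1)) * q^(m+1) = q^(k*n) * q^(2*n+1) := by
    rw [← pow_add, ← pow_add]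
    congr 1
    have hn : n = k+m+1 := by omega
    subst hn
    ring
  have sc1 : qBinom (n+1) (k+1) * q^((k+1)*(n+1))
      = qBinom n (k+1) * q^((k+1)*n) * q^(k+1) + qBinom n k * q^(k*n) * q^(2*n+1) := by
    linear_combination q^((k+1)*(n+1)) * hp + qBinom n (k+1) * hq1 + qBinom n k * hq2
  have dist : (LinearMap.mulLeft F (Polynomial.X * h s m)
        + (q^m*qInt m*s) • LinearMap.mulLeft F (h s (m-1))) * (s • Dq)^(k+1)
      = LinearMap.mulLeft F (Polynomial.X * h s m) * (s • Dq)^(k+1)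
        + (q^m*qInt m*s) • (LinearMap.mulLeft F (h s (m-1)) * (s • Dq)^(k+1)) := by
    rw [add_mul (LinearMap.mulLeft F (Polynomial.X * h s m))
        ((q^m*qInt m*s) • LinearMap.mulLeft F (h s (m-1))) ((s • Dq)^(k+1)),
      smul_mul_assoc]
  rw [dist, smul_add, smul_add, smul_smul, smul_smul, sc1,
    add_mul (qBinom n (k+1) * q^((k+1)*n) * q^(k+1)) (qBinom n k * q^(k*n) * q^(2*n+1))
      (q^m*qInt m*s),
    add_smul (qBinom n (k+1) * q^((k+1)*n) * q^(k+1)) (qBinom n k * q^(k*n) * q^(2*n+1)),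
    add_smul (qBinom n (k+1) * q^((k+1)*n) * q^(k+1) * (q^m*qInt m*s))
      (qBinom n k * q^(k*n) * q^(2*n+1) * (q^m*qInt m*s))]
  abel

set_option synthInstance.maxHeartbeats 1000000 in
set_option maxHeartbeats 1000000 in
/- STATEMENT 10: G(n) = Σ_{k=0}^{n} [n choose k]_q q^{kn} h_{n-k}(X,s) (s D_q)^k. -/
theorem Gop_eq (n : ℕ) :
    Gop n =
      ∑ k ∈ Finset.range (n + 1),
        (qBinom n k * q ^ (k * n)) •
          (LinearMap.mulLeft F (h s (n - k)) * (s • Dq) ^ k) := by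
  induction n with
  | zero =>
    rw [show Gop 0 = 1 from rfl, Finset.sum_range_one, h_zero, qBinom_zero]
    simp [LinearMap.mulLeft_one]
    rfl
  | succ n ih =>
    have hGs : Gop (n+1) = Gop n * (Xop + (q^(2*n+1)*s) • Dq) := rfl
    rw [hGs, ih]
    have hL : (∑ k ∈ Finset.range (n+1), (qBinom n k * q^(k*n)) •
        (LinearMap.mulLeft F (h s (n-k)) * (s • Dq)^k)) = ∑ k ∈ Finset.range (n+1), tt n k := rfl
    have hG : (∑ k ∈ Finset.range (n+1+1), (qBinom (n+1) k * q^(k*(n+1))) •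
        (LinearMap.mulLeft F (h s (n+1-k)) * (s • Dq)^k)) = ∑ k ∈ Finset.range (n+2), tt (n+1) k := rfl
    rw [hL, hG, Finset.sum_mul,
      Finset.sum_congr rfl (fun k _ => step_expand n k),
      Finset.sum_add_distrib, Finset.sum_add_distrib, sb_sum]
    exact (combine n (tt (n+1)) (ta n) (tb n) (tc n) (hyp0 n)
      (fun k hk => hypmid n k hk) (hyptop n)).symm

end
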